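/- Let Π be a finite group and V an irreducible representation of Π over 𝔽₂ that is 𝔽₂-orthogonal, i.e. admits a nonzero Π-invariant element of Sym² V. Then the map induced by Δ(x ⊗ y) = x ⊗ y + y ⊗ x from the Π-invariants of Sym² V to the Π-invariants of ∧₂ V is surjective, where ∧₂ V ⊆ V ⊗ V is the image of Δ on V ⊗ V. -/

import Mathlib

open TensorProduct

namespace Stmt12

lemma addself {M : Type*} [AddCommGroup M] [Module (ZMod 2) M] (x : M) : x + x = 0 := by
  have h : (2 : ZMod 2) • x = 0 := by
    have : (2 : ZMod 2) = 0 := rfl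
    simp [this]
  simpa [two_smul] using h

lemma negself {M : Type*} [AddCommGroup M] [Module (ZMod 2) M] (x : M) : -x = x :=
  neg_eq_of_add_eq_zero_right (addself x)

lemma subeq {M : Type*} [AddCommGroup M] [Module (ZMod 2) M] (x y : M) : x - y = x + y := by
  rw [sub_eq_add_neg, negself]

lemma nsmul2 {M : Type*} [AddCommGroup M] [Module (ZMod 2) M] (x : M) : (2 : ℕ) • x = 0 := by
  rw [two_smul]; exact addself x

lemma zsmul2 {M : Type*} [AddCommGroup M] [Module (ZMod 2) M] (x : M) : (2 : ℤ) • x = 0 := by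
  rw [two_smul]; exact addself x

variable {V : Type*} [AddCommGroup V] [Module (ZMod 2) V]

/-- generators of S -/
def Sgen (V : Type*) [AddCommGroup V] [Module (ZMod 2) V] : Set (V ⊗[ZMod 2] V) :=
  {t | ∃ x y : V, t = x ⊗ₜ[ZMod 2] y + y ⊗ₜ[ZMod 2] x}

lemma map_S_le (f : V →ₗ[ZMod 2] V) :
    (Submodule.span (ZMod 2) (Sgen V)).map (TensorProduct.map f f) ≤
      Submodule.span (ZMod 2) (Sgen V) := by
  rw [Submodule.map_span, Submodule.span_le]
  rintro t ⟨s, ⟨x, y, rfl⟩, rfl⟩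
  exact Submodule.subset_span ⟨f x, f y, by simp⟩

lemma comm_fix_S {t : V ⊗[ZMod 2] V} (ht : t ∈ Submodule.span (ZMod 2) (Sgen V)) :
    TensorProduct.comm (ZMod 2) V V t = t := by
  induction ht using Submodule.span_induction with
  | mem s hs => obtain ⟨x, y, rfl⟩ := hs; simp [add_comm]
  | zero => simp
  | add a b _ _ ha hb => simp [ha, hb]
  | smul c a _ ha => simp [ha]

lemma delta_mem_S (t : V ⊗[ZMod 2] V) :
    t + TensorProduct.comm (ZMod 2) V V t ∈ Submodule.span (ZMod 2) (Sgen V) := by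
  induction t using TensorProduct.induction_on with
  | zero => simp
  | tmul x y => exact Submodule.subset_span ⟨x, y, by simp⟩
  | add a b ha hb =>
      have : a + b + (TensorProduct.comm (ZMod 2) V V) (a + b)
          = (a + (TensorProduct.comm (ZMod 2) V V) a)
            + (b + (TensorProduct.comm (ZMod 2) V V) b) := by
        simp; abel
      rw [this]; exact Submodule.add_mem _ ha hb


noncomputable def ctr (l : Module.Dual (ZMod 2) V) : V ⊗[ZMod 2] V →ₗ[ZMod 2] V :=
  (TensorProduct.rid (ZMod 2) V).toLinearMap ∘ₗ (LinearMap.lTensor V l)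

@[simp] lemma ctr_tmul (l : Module.Dual (ZMod 2) V) (x y : V) :
    ctr l (x ⊗ₜ[ZMod 2] y) = l y • x := by simp [ctr]

lemma repr_ctr {ι : Type*} [Fintype ι] [DecidableEq ι] (b : Module.Basis ι (ZMod 2) V)
    (t : V ⊗[ZMod 2] V) (i j : ι) :
    (b.tensorProduct b).repr t (i, j) = b.repr (ctr (b.coord j) t) i := by
  induction t using TensorProduct.induction_on with
  | zero => simp
  | tmul x y => simp [Module.Basis.tensorProduct_repr_tmul_apply, Module.Basis.coord_apply, mul_comm]
  | add a c ha hc => simp [ha, hc]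

lemma ctr_sep [FiniteDimensional (ZMod 2) V] {t₁ t₂ : V ⊗[ZMod 2] V}
    (h : ∀ l, ctr l t₁ = ctr l t₂) : t₁ = t₂ := by
  classical
  let b := Module.finBasis (ZMod 2) V
  apply (b.tensorProduct b).repr.injective
  ext ⟨i, j⟩
  rw [repr_ctr b t₁ i j, repr_ctr b t₂ i j, h]

lemma ctr_zero_all [FiniteDimensional (ZMod 2) V] {t : V ⊗[ZMod 2] V}
    (h : ∀ l, ctr l t = 0) : t = 0 :=
  ctr_sep (by simp [h])

lemma ctr_map (l : Module.Dual (ZMod 2) V) (f h : V →ₗ[ZMod 2] V) (t : V ⊗[ZMod 2] V) :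
    ctr l (TensorProduct.map f h t) = f (ctr (l ∘ₗ h) t) := by
  induction t using TensorProduct.induction_on with
  | zero => simp
  | tmul x y => simp
  | add a c ha hc => simp [ha, hc]

noncomputable def Phi (t : V ⊗[ZMod 2] V) : Module.Dual (ZMod 2) V →ₗ[ZMod 2] V where
  toFun l := ctr l t
  map_add' l m := by simp [ctr, LinearMap.lTensor_add, LinearMap.comp_add]
  map_smul' c l := by simp [ctr, LinearMap.lTensor_smul, LinearMap.comp_smul]

@[simp] lemma Phi_apply (t : V ⊗[ZMod 2] V) (l : Module.Dual (ZMod 2) V) :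
    Phi t l = ctr l t := rfl

lemma schur {G : Type*} [Group G] [FiniteDimensional (ZMod 2) V]
    (ρ : Representation (ZMod 2) G V)
    (hirr : ∀ W : Submodule (ZMod 2) V, (∀ g : G, W.map (ρ g) ≤ W) → W = ⊥ ∨ W = ⊤)
    (f : V →ₗ[ZMod 2] V) (hf : ∀ g, f ∘ₗ ρ g = ρ g ∘ₗ f) (hf0 : f ≠ 0) :
    Function.Bijective f := by
  have hker : ∀ g : G, (LinearMap.ker f).map (ρ g) ≤ LinearMap.ker f := by
    rintro g x ⟨y, hy, rfl⟩
    have h1 := LinearMap.congr_fun (hf g) y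
    simp only [LinearMap.comp_apply] at h1
    simp only [LinearMap.mem_ker] at hy ⊢
    rw [h1, hy, map_zero]
  rcases hirr _ hker with h | h
  · have hinj := LinearMap.ker_eq_bot.mp h
    exact ⟨hinj, (LinearMap.injective_iff_surjective).mp hinj⟩
  · exact absurd (LinearMap.ker_eq_top.mp h) hf0


lemma key_surj {G : Type*} [Group G] [FiniteDimensional (ZMod 2) V]
    (ρ : Representation (ZMod 2) G V)
    (hirr : ∀ W : Submodule (ZMod 2) V, (∀ g : G, W.map (ρ g) ≤ W) → W = ⊥ ∨ W = ⊤)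
    (ω : V ⊗[ZMod 2] V) (hω0 : ω ≠ 0)
    (hωinv : ∀ g, TensorProduct.map (ρ g) (ρ g) ω = ω)
    (u : V ⊗[ZMod 2] V) (huinv : ∀ g, TensorProduct.map (ρ g) (ρ g) u = u) :
    ∃ k : V →ₗ[ZMod 2] V, (∀ g, k ∘ₗ ρ g = ρ g ∘ₗ k) ∧
      TensorProduct.map k LinearMap.id ω = u := by
  classical
  have hcomp : ∀ (l : Module.Dual (ZMod 2) V) (g : G), (l ∘ₗ ρ g⁻¹) ∘ₗ ρ g = l := by
    intro l g
    rw [LinearMap.comp_assoc, ← Module.End.mul_eq_comp, ← map_mul]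
    simp [show (1 : Module.End (ZMod 2) V) = LinearMap.id from rfl]
  have hequiv : ∀ (t : V ⊗[ZMod 2] V), (∀ g, TensorProduct.map (ρ g) (ρ g) t = t) →
      ∀ (g : G) (l : Module.Dual (ZMod 2) V), ρ g (Phi t l) = Phi t (l ∘ₗ ρ g⁻¹) := by
    intro t ht g l
    have h1 := ctr_map (l ∘ₗ ρ g⁻¹) (ρ g) (ρ g) t
    rw [ht g, hcomp] at h1
    simp only [Phi_apply]
    rw [h1]
  have hrange : ∀ g : G, (LinearMap.range (Phi ω)).map (ρ g) ≤ LinearMap.range (Phi ω) := by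
    rintro g x ⟨y, ⟨l, rfl⟩, rfl⟩
    exact ⟨l ∘ₗ ρ g⁻¹, (hequiv ω hωinv g l).symm⟩
  have hsurj : Function.Surjective (Phi ω) := by
    rcases hirr _ hrange with h | h
    · exfalso
      apply hω0
      apply ctr_zero_all
      intro l
      have : Phi ω l ∈ (⊥ : Submodule (ZMod 2) V) := h ▸ LinearMap.mem_range_self _ l
      simpa using this
    · exact LinearMap.range_eq_top.mp h
  have hinj : Function.Injective (Phi ω) := by
    rw [LinearMap.injective_iff_surjective_of_finrank_eq_finrank
      (Subspace.dual_finrank_eq)]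
    exact hsurj
  set e := LinearEquiv.ofBijective (Phi ω) ⟨hinj, hsurj⟩ with he
  set k : V →ₗ[ZMod 2] V := Phi u ∘ₗ (e.symm : V →ₗ[ZMod 2] Module.Dual (ZMod 2) V)
    with hk
  have hkPhi : ∀ l, k (Phi ω l) = Phi u l := by
    intro l
    have h0 : Phi ω l = e l := rfl
    rw [hk]
    simp only [LinearMap.comp_apply, LinearEquiv.coe_coe, h0,
      LinearEquiv.symm_apply_apply]
  refine ⟨k, ?_, ?_⟩
  · intro g
    ext x
    obtain ⟨l, rfl⟩ := hsurj x
    simp only [LinearMap.comp_apply]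
    rw [hequiv ω hωinv g l, hkPhi (l ∘ₗ ρ g⁻¹), hkPhi l, hequiv u huinv g l]
  · apply ctr_sep
    intro l
    rw [ctr_map]
    have h3 : ctr (l ∘ₗ LinearMap.id) ω = Phi ω (l ∘ₗ LinearMap.id) := rfl
    rw [h3, hkPhi (l ∘ₗ LinearMap.id)]
    simp


lemma tmul_self_mem_S_iff [FiniteDimensional (ZMod 2) V] {x : V}
    (h : x ⊗ₜ[ZMod 2] x ∈ Submodule.span (ZMod 2) (Sgen V)) : x = 0 := by
  by_contra hx
  obtain ⟨φ, hφ⟩ : ∃ φ : Module.Dual (ZMod 2) V, φ x ≠ 0 := by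
    by_contra hall
    push_neg at hall
    exact hx ((Module.forall_dual_apply_eq_zero_iff (ZMod 2) x).mp hall)
  set L : V ⊗[ZMod 2] V →ₗ[ZMod 2] ZMod 2 := TensorProduct.lift (φ.smulRight φ) with hL
  have hLS : ∀ t ∈ Submodule.span (ZMod 2) (Sgen V), L t = 0 := by
    intro t ht
    induction ht using Submodule.span_induction with
    | mem s hs =>
        obtain ⟨a, c, rfl⟩ := hs
        simp only [hL, map_add, TensorProduct.lift.tmul, LinearMap.smulRight_apply,
          LinearMap.smul_apply, smul_eq_mul]
        rw [mul_comm (φ c) (φ a)]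
        exact addself _
    | zero => simp
    | add a c _ _ ha hc => simp [ha, hc]
    | smul r a _ ha => simp [ha]
  have := hLS _ h
  simp only [hL, TensorProduct.lift.tmul, LinearMap.smulRight_apply, smul_eq_mul] at this
  exact hφ (by rcases mul_self_eq_zero.mp this with h; exact h)

lemma repr_comm {ι : Type*} [Fintype ι] [DecidableEq ι] (b : Module.Basis ι (ZMod 2) V)
    (t : V ⊗[ZMod 2] V) (i j : ι) :
    (b.tensorProduct b).repr (TensorProduct.comm (ZMod 2) V V t) (i, j)
      = (b.tensorProduct b).repr t (j, i) := by
  induction t using TensorProduct.induction_on with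
  | zero => simp
  | tmul x y => simp [Module.Basis.tensorProduct_repr_tmul_apply, mul_comm]
  | add a c ha hc => simp [ha, hc]

lemma pair_mem_P (x y : V) :
    x ⊗ₜ[ZMod 2] y + y ⊗ₜ[ZMod 2] x ∈
      Submodule.span (ZMod 2) {s : V ⊗[ZMod 2] V | ∃ v, s = v ⊗ₜ[ZMod 2] v} := by
  have hgen : ∀ v : V, v ⊗ₜ[ZMod 2] v ∈
      Submodule.span (ZMod 2) {s : V ⊗[ZMod 2] V | ∃ v, s = v ⊗ₜ[ZMod 2] v} :=
    fun v => Submodule.subset_span ⟨v, rfl⟩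
  have key : x ⊗ₜ[ZMod 2] y + y ⊗ₜ[ZMod 2] x
      = (x + y) ⊗ₜ[ZMod 2] (x + y) + x ⊗ₜ[ZMod 2] x + y ⊗ₜ[ZMod 2] y := by
    have hexp : (x + y) ⊗ₜ[ZMod 2] (x + y)
        = x ⊗ₜ[ZMod 2] x + y ⊗ₜ[ZMod 2] y + (x ⊗ₜ[ZMod 2] y + y ⊗ₜ[ZMod 2] x) := by
      simp [TensorProduct.tmul_add, TensorProduct.add_tmul]
      abel
    rw [hexp]
    have h2 : ∀ a : V ⊗[ZMod 2] V, (2 : ℕ) • a = 0 := by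
      intro a; rw [two_smul]; exact addself a
    have h2z : ∀ a : V ⊗[ZMod 2] V, (2 : ℤ) • a = 0 := by
      intro a; rw [two_smul]; exact addself a
    abel_nf
    simp [h2, h2z]
  rw [key]
  exact Submodule.add_mem _ (Submodule.add_mem _ (hgen _) (hgen _)) (hgen _)

lemma symm_mem_P [FiniteDimensional (ZMod 2) V] {t : V ⊗[ZMod 2] V}
    (ht : TensorProduct.comm (ZMod 2) V V t = t) :
    t ∈ Submodule.span (ZMod 2) {s : V ⊗[ZMod 2] V | ∃ v, s = v ⊗ₜ[ZMod 2] v} := by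
  classical
  set P := Submodule.span (ZMod 2) {s : V ⊗[ZMod 2] V | ∃ v, s = v ⊗ₜ[ZMod 2] v} with hP
  have hgen : ∀ v : V, v ⊗ₜ[ZMod 2] v ∈ P := fun v => Submodule.subset_span ⟨v, rfl⟩
  set b := Module.finBasis (ZMod 2) V with hb
  set B := b.tensorProduct b with hB
  have hsym : ∀ i j : Fin (Module.finrank (ZMod 2) V),
      B.repr t (j, i) = B.repr t (i, j) := by
    intro i j
    have h1 := repr_comm b t j i
    rw [ht] at h1
    rw [hB]
    exact h1
  have hrepr := B.sum_repr t
  rw [← hrepr]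
  set f : Fin (Module.finrank (ZMod 2) V) × Fin (Module.finrank (ZMod 2) V)
      → V ⊗[ZMod 2] V := fun p => B.repr t p • B p with hf
  have h1 : ∑ p, f p
      = ∑ p ∈ Finset.univ.filter
          (fun p : Fin (Module.finrank (ZMod 2) V) × Fin (Module.finrank (ZMod 2) V)
            => p.1 < p.2), f p
        + ∑ p ∈ Finset.univ.filter
          (fun p : Fin (Module.finrank (ZMod 2) V) × Fin (Module.finrank (ZMod 2) V)
            => ¬ p.1 < p.2), f p :=
    (Finset.sum_filter_add_sum_filter_not _ _ _).symm
  have h2 : ∑ p ∈ Finset.univ.filter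
          (fun p : Fin (Module.finrank (ZMod 2) V) × Fin (Module.finrank (ZMod 2) V)
            => ¬ p.1 < p.2), f p
      = ∑ p ∈ Finset.univ.filter
          (fun p : Fin (Module.finrank (ZMod 2) V) × Fin (Module.finrank (ZMod 2) V)
            => p.2 < p.1), f p
        + ∑ p ∈ Finset.univ.filter
          (fun p : Fin (Module.finrank (ZMod 2) V) × Fin (Module.finrank (ZMod 2) V)
            => p.1 = p.2), f p := by
    rw [← Finset.sum_filter_add_sum_filter_not
      (Finset.univ.filter
        (fun p : Fin (Module.finrank (ZMod 2) V) × Fin (Module.finrank (ZMod 2) V)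
          => ¬ p.1 < p.2)) (fun p => p.2 < p.1) f]
    congr 1
    · congr 1
      ext p
      simp only [Finset.mem_filter, Finset.mem_univ, true_and, Finset.filter_filter]
      constructor
      · rintro ⟨_, h⟩; exact h
      · intro h; exact ⟨asymm h, h⟩
    · congr 1
      ext p
      simp only [Finset.mem_filter, Finset.mem_univ, true_and, Finset.filter_filter]
      constructor
      · rintro ⟨h1', h2'⟩; exact le_antisymm (not_lt.mp h2') (not_lt.mp h1')
      · intro h; rw [h]; exact ⟨lt_irrefl _, lt_irrefl _⟩
  have h3 : ∑ p ∈ Finset.univ.filter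
          (fun p : Fin (Module.finrank (ZMod 2) V) × Fin (Module.finrank (ZMod 2) V)
            => p.2 < p.1), f p
      = ∑ p ∈ Finset.univ.filter
          (fun p : Fin (Module.finrank (ZMod 2) V) × Fin (Module.finrank (ZMod 2) V)
            => p.1 < p.2), B.repr t p • (b p.2 ⊗ₜ[ZMod 2] b p.1) := by
    refine Finset.sum_nbij' (fun p => Prod.swap p) (fun p => Prod.swap p) ?_ ?_ ?_ ?_ ?_
    · intro p hp
      simp only [Finset.mem_filter, Finset.mem_univ, true_and] at hp ⊢
      exact hp
    · intro p hp
      simp only [Finset.mem_filter, Finset.mem_univ, true_and] at hp ⊢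
      exact hp
    · intro p _; simp
    · intro p _; simp
    · rintro ⟨i, j⟩ hp
      have hBij : B (i, j) = b i ⊗ₜ[ZMod 2] b j := Module.Basis.tensorProduct_apply b b i j
      rw [hf]
      simp only [Prod.swap_prod_mk]
      rw [hBij, hsym j i]
  rw [h1, h2, h3, ← add_assoc]
  refine Submodule.add_mem _ ?_ ?_
  · rw [← Finset.sum_add_distrib]
    refine Submodule.sum_mem _ ?_
    rintro ⟨i, j⟩ _
    have hBij : B (i, j) = b i ⊗ₜ[ZMod 2] b j := Module.Basis.tensorProduct_apply b b i j
    rw [hf]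
    simp only
    rw [hBij, ← smul_add]
    exact Submodule.smul_mem _ _ (pair_mem_P _ _)
  · refine Submodule.sum_mem _ ?_
    rintro ⟨i, j⟩ hp
    simp only [Finset.mem_filter] at hp
    have hBij : B (i, j) = b i ⊗ₜ[ZMod 2] b j := Module.Basis.tensorProduct_apply b b i j
    rw [hf]
    simp only
    rw [hBij]
    rcases hp.2 with rfl
    exact Submodule.smul_mem _ _ (hgen _)

lemma mem_P_reduce {t : V ⊗[ZMod 2] V}
    (ht : t ∈ Submodule.span (ZMod 2) {s : V ⊗[ZMod 2] V | ∃ v, s = v ⊗ₜ[ZMod 2] v}) :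
    ∃ v : V, t + v ⊗ₜ[ZMod 2] v ∈ Submodule.span (ZMod 2) (Sgen V) := by
  induction ht using Submodule.span_induction with
  | mem s hs =>
      obtain ⟨v, rfl⟩ := hs
      exact ⟨v, by rw [addself]; exact Submodule.zero_mem _⟩
  | zero => exact ⟨0, by simp⟩
  | add a c _ _ ha hc =>
      obtain ⟨v₁, h₁⟩ := ha
      obtain ⟨v₂, h₂⟩ := hc
      refine ⟨v₁ + v₂, ?_⟩
      have hexp : (v₁ + v₂) ⊗ₜ[ZMod 2] (v₁ + v₂)
          = v₁ ⊗ₜ[ZMod 2] v₁ + v₂ ⊗ₜ[ZMod 2] v₂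
            + (v₁ ⊗ₜ[ZMod 2] v₂ + v₂ ⊗ₜ[ZMod 2] v₁) := by
        simp [TensorProduct.tmul_add, TensorProduct.add_tmul]
        abel
      have : a + c + (v₁ + v₂) ⊗ₜ[ZMod 2] (v₁ + v₂)
          = (a + v₁ ⊗ₜ[ZMod 2] v₁) + (c + v₂ ⊗ₜ[ZMod 2] v₂)
            + (v₁ ⊗ₜ[ZMod 2] v₂ + v₂ ⊗ₜ[ZMod 2] v₁) := by
        rw [hexp]; abel
      rw [this]
      exact Submodule.add_mem _ (Submodule.add_mem _ h₁ h₂)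
        (Submodule.subset_span ⟨v₁, v₂, rfl⟩)
  | smul r a ha hrec =>
      obtain ⟨v, hv⟩ := hrec
      rcases (by decide : ∀ r : ZMod 2, r = 0 ∨ r = 1) r with h | h
      · exact ⟨0, by simp [h]⟩
      · exact ⟨v, by simpa [h] using hv⟩


lemma mapmap (f h f' h' : V →ₗ[ZMod 2] V) (t : V ⊗[ZMod 2] V) :
    TensorProduct.map f h (TensorProduct.map f' h' t)
      = TensorProduct.map (f ∘ₗ f') (h ∘ₗ h') t := by
  rw [← LinearMap.comp_apply, ← TensorProduct.map_comp]

lemma comm_comm (t : V ⊗[ZMod 2] V) :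
    TensorProduct.comm (ZMod 2) V V (TensorProduct.comm (ZMod 2) V V t) = t := by
  induction t using TensorProduct.induction_on with
  | zero => simp
  | tmul x y => simp
  | add a c ha hc => simp [ha, hc]

end Stmt12

open Stmt12 in
open TensorProduct in
set_option maxHeartbeats 1600000 in
/-- Let `V` be an irreducible `𝔽₂`-orthogonal representation of a finite group `G` over
`𝔽₂`.  With `S = ∧₂V ⊆ V ⊗ V` the span of the `x ⊗ y + y ⊗ x` (so that `Sym² V = (V⊗V)/S`
and `Δ q = q + swap q` induces `Sym² V → ∧₂ V`), the induced map
`(Sym² V)^G → (∧₂ V)^G` is surjective: every `G`-invariant `w ∈ ∧₂V` is `Δ q` for some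
`q ∈ V ⊗ V` whose class in `Sym² V` is `G`-invariant. -/
theorem stmt_12 (G : Type*) [Group G] [Finite G]
    (V : Type*) [AddCommGroup V] [Module (ZMod 2) V] [FiniteDimensional (ZMod 2) V]
    [Nontrivial V]
    (ρ : Representation (ZMod 2) G V)
    (hirr : ∀ W : Submodule (ZMod 2) V, (∀ g : G, W.map (ρ g) ≤ W) → W = ⊥ ∨ W = ⊤)
    (S : Submodule (ZMod 2) (V ⊗[ZMod 2] V))
    (hS : S = Submodule.span (ZMod 2)
      {t : V ⊗[ZMod 2] V | ∃ x y : V, t = x ⊗ₜ[ZMod 2] y + y ⊗ₜ[ZMod 2] x})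
    (horth : ∃ q : V ⊗[ZMod 2] V, q ∉ S ∧
      ∀ g : G, TensorProduct.map (ρ g) (ρ g) q - q ∈ S) :
    ∀ w ∈ S, (∀ g : G, TensorProduct.map (ρ g) (ρ g) w = w) →
      ∃ q : V ⊗[ZMod 2] V,
        (∀ g : G, TensorProduct.map (ρ g) (ρ g) q - q ∈ S) ∧
        q + (TensorProduct.comm (ZMod 2) V V) q = w := by
  classical
  have hSS : S = Submodule.span (ZMod 2) (Sgen V) := hS
  intro w hwS hwinv
  obtain ⟨q₀, hq₀S, hq₀inv⟩ := horth
  rw [hSS] at hq₀S hwS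
  have hq₀inv' : ∀ g : G, TensorProduct.map (ρ g) (ρ g) q₀ + q₀
      ∈ Submodule.span (ZMod 2) (Sgen V) := by
    intro g
    have := hq₀inv g
    rw [hSS, subeq] at this
    exact this
  by_cases hω : q₀ + TensorProduct.comm (ZMod 2) V V q₀ = 0
  · -- degenerate case : the action is trivial and V is one-dimensional, so S = ⊥
    have hq0sym : TensorProduct.comm (ZMod 2) V V q₀ = q₀ := by
      have h1 := eq_neg_of_add_eq_zero_right hω
      rw [negself] at h1
      exact h1
    obtain ⟨v, hv⟩ := mem_P_reduce (symm_mem_P hq0sym)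
    have hvne : v ≠ 0 := by
      rintro rfl
      simp only [TensorProduct.zero_tmul, add_zero] at hv
      exact hq₀S hv
    have hfix : ∀ g, ρ g v = v := by
      intro g
      have h1 : TensorProduct.map (ρ g) (ρ g) (q₀ + v ⊗ₜ[ZMod 2] v)
          ∈ Submodule.span (ZMod 2) (Sgen V) :=
        map_S_le (ρ g) ⟨_, hv, rfl⟩
      rw [map_add, TensorProduct.map_tmul] at h1
      have h2 := Submodule.add_mem _ (Submodule.add_mem _ (hq₀inv' g) h1) hv
      have h3 : TensorProduct.map (ρ g) (ρ g) q₀ + q₀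
          + (TensorProduct.map (ρ g) (ρ g) q₀ + (ρ g) v ⊗ₜ[ZMod 2] (ρ g) v)
          + (q₀ + v ⊗ₜ[ZMod 2] v)
          = (ρ g) v ⊗ₜ[ZMod 2] (ρ g) v + v ⊗ₜ[ZMod 2] v := by
        abel_nf
        simp [nsmul2, zsmul2]
      rw [h3] at h2
      have hexp : ((ρ g) v + v) ⊗ₜ[ZMod 2] ((ρ g) v + v)
          = (ρ g) v ⊗ₜ[ZMod 2] (ρ g) v + v ⊗ₜ[ZMod 2] v
            + ((ρ g) v ⊗ₜ[ZMod 2] v + v ⊗ₜ[ZMod 2] (ρ g) v) := by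
        simp [TensorProduct.tmul_add, TensorProduct.add_tmul]
        abel
      have h5 : ((ρ g) v + v) ⊗ₜ[ZMod 2] ((ρ g) v + v)
          ∈ Submodule.span (ZMod 2) (Sgen V) := by
        rw [hexp]
        exact Submodule.add_mem _ h2 (Submodule.subset_span ⟨(ρ g) v, v, rfl⟩)
      have h6 := tmul_self_mem_S_iff h5
      have h7 := eq_neg_of_add_eq_zero_left h6
      rw [negself] at h7
      exact h7
    have hFix : ∀ (x : V) (g : G), ρ g x = x := by
      let Fx : Submodule (ZMod 2) V :=
        { carrier := {x | ∀ g : G, ρ g x = x}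
          add_mem' := fun ha hb g => by rw [map_add, ha g, hb g]
          zero_mem' := fun g => map_zero _
          smul_mem' := fun c x hx g => by rw [map_smul, hx g] }
      have hmap : ∀ g : G, Fx.map (ρ g) ≤ Fx := by
        rintro g x ⟨y, hy, rfl⟩
        intro g'
        rw [hy g]
        exact hy g'
      rcases hirr Fx hmap with h | h
      · exfalso
        have hvF : v ∈ Fx := hfix
        rw [h] at hvF
        exact hvne hvF
      · intro x g
        have hxF : x ∈ Fx := h ▸ Submodule.mem_top
        exact hxF g
    have hdim : ∀ x : V, x ≠ 0 → ∀ y : V, y = 0 ∨ y = x := by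
      intro x hx y
      have hsp : ∀ g : G, (Submodule.span (ZMod 2) {x}).map (ρ g)
          ≤ Submodule.span (ZMod 2) {x} := by
        rintro g z ⟨y', hy', rfl⟩
        rw [hFix y' g]
        exact hy'
      rcases hirr _ hsp with h | h
      · exfalso
        have hxx : x ∈ Submodule.span (ZMod 2) {x} := Submodule.mem_span_singleton_self x
        rw [h] at hxx
        exact hx hxx
      · have hy : y ∈ Submodule.span (ZMod 2) {x} := h ▸ Submodule.mem_top
        obtain ⟨c, rfl⟩ := Submodule.mem_span_singleton.mp hy
        rcases (by decide : ∀ r : ZMod 2, r = 0 ∨ r = 1) c with rfl | rfl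
        · left; simp
        · right; simp
    have hSbot : ∀ t ∈ Submodule.span (ZMod 2) (Sgen V), t = 0 := by
      intro t ht
      have hle : Submodule.span (ZMod 2) (Sgen V) ≤ ⊥ := by
        rw [Submodule.span_le]
        rintro s ⟨x, y, rfl⟩
        by_cases hx : x = 0
        · simp [hx]
        · rcases hdim x hx y with rfl | rfl
          · simp
          · simp only [SetLike.mem_coe, Submodule.mem_bot]
            exact addself _
      simpa using hle ht
    refine ⟨0, ?_, ?_⟩
    · intro g
      simp only [map_zero, sub_zero]
      exact Submodule.zero_mem _
    · rw [hSbot w hwS]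
      simp
  · -- main case: ω ≠ 0
    set ω := q₀ + TensorProduct.comm (ZMod 2) V V q₀ with hωdef
    have hωS : ω ∈ Submodule.span (ZMod 2) (Sgen V) := delta_mem_S q₀
    have hωsym : TensorProduct.comm (ZMod 2) V V ω = ω := comm_fix_S hωS
    have hωinv : ∀ g : G, TensorProduct.map (ρ g) (ρ g) ω = ω := by
      intro g
      have hd := hq₀inv' g
      set d := TensorProduct.map (ρ g) (ρ g) q₀ + q₀ with hddef
      have hq : TensorProduct.map (ρ g) (ρ g) q₀ = q₀ + d := by
        rw [hddef]
        abel_nf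
        simp [nsmul2, zsmul2]
      rw [hωdef, map_add, TensorProduct.map_comm, hq, map_add, comm_fix_S hd]
      abel_nf
      simp [nsmul2, zsmul2]
    haveI : Finite V := Module.finite_of_finite (ZMod 2)
    haveI : Finite (V →ₗ[ZMod 2] V) :=
      Finite.of_injective (fun f => (f : V → V)) DFunLike.coe_injective
    set K := Subalgebra.centralizer (ZMod 2) (Set.range ρ) with hK
    haveI : Finite K := Subtype.finite
    have hmemK : ∀ f : V →ₗ[ZMod 2] V, (∀ g : G, f ∘ₗ ρ g = ρ g ∘ₗ f) → f ∈ K := by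
      intro f hf
      rw [hK, Subalgebra.mem_centralizer_iff]
      rintro x ⟨g, rfl⟩
      exact (hf g).symm
    have hKcomm : ∀ (a : V →ₗ[ZMod 2] V), a ∈ K →
        ∀ g : G, a ∘ₗ ρ g = ρ g ∘ₗ a := by
      intro a ha g
      rw [hK, Subalgebra.mem_centralizer_iff] at ha
      exact (ha (ρ g) ⟨g, rfl⟩).symm
    have hbij : ∀ a : K, a ≠ 0 → Function.Bijective (a : V →ₗ[ZMod 2] V) := by
      intro a ha
      refine schur ρ hirr _ (hKcomm a a.2) ?_
      intro h0
      exact ha (Subtype.ext h0)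
    haveI : Nontrivial K := by
      refine ⟨1, 0, fun h => ?_⟩
      obtain ⟨x, hx⟩ := exists_ne (0 : V)
      have h1 : ((1 : K) : V →ₗ[ZMod 2] V) x = ((0 : K) : V →ₗ[ZMod 2] V) x := by rw [h]
      simp only [OneMemClass.coe_one, Module.End.one_apply, ZeroMemClass.coe_zero,
        LinearMap.zero_apply] at h1
      exact hx h1
    haveI : NoZeroDivisors K := by
      refine ⟨fun {a b} hab => ?_⟩
      by_cases ha : a = 0
      · exact Or.inl ha
      · right
        have hbj := hbij a ha
        apply Subtype.ext
        ext x
        have hc : ((a * b : K) : V →ₗ[ZMod 2] V) x = 0 := by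
          rw [hab]; rfl
        have hc2 : (a : V →ₗ[ZMod 2] V) ((b : V →ₗ[ZMod 2] V) x) = 0 := hc
        have := hbj.1 (show (a : V →ₗ[ZMod 2] V) ((b : V →ₗ[ZMod 2] V) x)
          = (a : V →ₗ[ZMod 2] V) 0 by rw [hc2, map_zero])
        simpa using this
    haveI : IsDomain K := NoZeroDivisors.to_isDomain _
    have hcomm : ∀ a b : K, a * b = b * a := by
      haveI : Fintype K := Fintype.ofFinite K
      haveI : DecidableEq K := Classical.decEq _
      letI : DivisionRing K := Fintype.divisionRingOfIsDomain K
      letI : Field K := littleWedderburn K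
      intro a b
      exact mul_comm a b
    letI : CommRing K := { (inferInstance : Ring K) with mul_comm := hcomm }
    have hexinv : ∀ u : K, u ≠ 0 → ∃ u' : K, u * u' = 1 := by
      intro u hu
      have hiM : Function.Injective (fun x : K => u * x) := by
        intro x y hxy
        simp only at hxy
        exact mul_left_cancel₀ hu hxy
      obtain ⟨u', hu'⟩ := Finite.injective_iff_surjective.mp hiM 1
      exact ⟨u', hu'⟩
    have hKS : ∀ u : V ⊗[ZMod 2] V, (∀ g : G, TensorProduct.map (ρ g) (ρ g) u = u) →
        ∃ a : K, TensorProduct.map (a : V →ₗ[ZMod 2] V) LinearMap.id ω = u := by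
      intro u hu
      obtain ⟨k, hk1, hk2⟩ := key_surj ρ hirr ω hω hωinv u hu
      exact ⟨⟨k, hmemK k hk1⟩, hk2⟩
    have hinvmap : ∀ a : K, ∀ g : G, TensorProduct.map (ρ g) (ρ g)
        (TensorProduct.map LinearMap.id (a : V →ₗ[ZMod 2] V) ω)
        = TensorProduct.map LinearMap.id (a : V →ₗ[ZMod 2] V) ω := by
      intro a g
      rw [mapmap]
      have h1 : (ρ g) ∘ₗ LinearMap.id = LinearMap.id ∘ₗ (ρ g) := by
        rw [LinearMap.comp_id, LinearMap.id_comp]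
      have h2 : (ρ g) ∘ₗ (a : V →ₗ[ZMod 2] V) = (a : V →ₗ[ZMod 2] V) ∘ₗ ρ g :=
        (hKcomm a a.2 g).symm
      rw [h1, h2, ← mapmap, hωinv g]
    have hsig : ∀ a : K, ∃ a' : K,
        TensorProduct.map (a' : V →ₗ[ZMod 2] V) LinearMap.id ω
          = TensorProduct.map LinearMap.id (a : V →ₗ[ZMod 2] V) ω :=
      fun a => hKS _ (hinvmap a)
    choose σ hσ using hsig
    have hinj : ∀ a b : K,
        TensorProduct.map (a : V →ₗ[ZMod 2] V) LinearMap.id ω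
          = TensorProduct.map (b : V →ₗ[ZMod 2] V) LinearMap.id ω → a = b := by
      intro a b hab
      by_contra hne
      have hd : a + b ≠ 0 := by
        intro h
        apply hne
        have h1 := eq_neg_of_add_eq_zero_left h
        rwa [negself] at h1
      have hbj := hbij _ hd
      have h0 : TensorProduct.map ((a + b : K) : V →ₗ[ZMod 2] V) LinearMap.id ω = 0 := by
        have hca : ((a + b : K) : V →ₗ[ZMod 2] V)
            = (a : V →ₗ[ZMod 2] V) + (b : V →ₗ[ZMod 2] V) := rfl
        rw [hca, TensorProduct.map_add_left, LinearMap.add_apply, hab]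
        exact addself _
      set e := LinearEquiv.ofBijective _ hbj with he
      have hMeq : TensorProduct.map ((a + b : K) : V →ₗ[ZMod 2] V) LinearMap.id
          = (TensorProduct.congr e (LinearEquiv.refl (ZMod 2) V)).toLinearMap := by
        apply TensorProduct.ext'
        intro x y
        simp [TensorProduct.congr_tmul, he]
      have h1 : (TensorProduct.congr e (LinearEquiv.refl (ZMod 2) V)).toLinearMap ω = 0 := by
        rw [← hMeq]; exact h0
      apply hω
      apply (TensorProduct.congr e (LinearEquiv.refl (ZMod 2) V)).injective
      rw [map_zero]
      exact h1
    have hmswap : ∀ (a b : K) (t : V ⊗[ZMod 2] V),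
        TensorProduct.map (a : V →ₗ[ZMod 2] V) LinearMap.id
          (TensorProduct.map LinearMap.id (b : V →ₗ[ZMod 2] V) t)
        = TensorProduct.map LinearMap.id (b : V →ₗ[ZMod 2] V)
          (TensorProduct.map (a : V →ₗ[ZMod 2] V) LinearMap.id t) := by
      intro a b t
      rw [mapmap, mapmap, LinearMap.comp_id, LinearMap.id_comp,
        LinearMap.comp_id, LinearMap.id_comp]
    have hσmul : ∀ a b : K, σ (a * b) = σ a * σ b := by
      intro a b
      have h1 : TensorProduct.map ((σ (a * b) : K) : V →ₗ[ZMod 2] V) LinearMap.id ω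
          = TensorProduct.map ((σ b * σ a : K) : V →ₗ[ZMod 2] V) LinearMap.id ω := by
        rw [hσ (a * b)]
        have hca : ((a * b : K) : V →ₗ[ZMod 2] V)
            = (a : V →ₗ[ZMod 2] V) ∘ₗ (b : V →ₗ[ZMod 2] V) := rfl
        have h2 : TensorProduct.map LinearMap.id ((a * b : K) : V →ₗ[ZMod 2] V) ω
            = TensorProduct.map LinearMap.id (a : V →ₗ[ZMod 2] V)
              (TensorProduct.map LinearMap.id (b : V →ₗ[ZMod 2] V) ω) := by
          rw [mapmap, LinearMap.comp_id, hca]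
        rw [h2, ← hσ b, ← hmswap (σ b) a, ← hσ a, mapmap, LinearMap.comp_id]
        rfl
      rw [hinj _ _ h1, mul_comm]
    have hσadd : ∀ a b : K, σ (a + b) = σ a + σ b := by
      intro a b
      apply hinj
      rw [hσ (a + b)]
      have hca : ((a + b : K) : V →ₗ[ZMod 2] V)
          = (a : V →ₗ[ZMod 2] V) + (b : V →ₗ[ZMod 2] V) := rfl
      have hcs : ((σ a + σ b : K) : V →ₗ[ZMod 2] V)
          = ((σ a : K) : V →ₗ[ZMod 2] V) + ((σ b : K) : V →ₗ[ZMod 2] V) := rfl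
      rw [hca, hcs, TensorProduct.map_add_right, TensorProduct.map_add_left,
        LinearMap.add_apply, LinearMap.add_apply, ← hσ a, ← hσ b]
    have hσone : σ (1 : K) = 1 := by
      apply hinj
      rw [hσ 1]
      rfl
    have hσinvol : ∀ a : K, σ (σ a) = a := by
      intro a
      apply hinj
      rw [hσ (σ a)]
      calc TensorProduct.map LinearMap.id ((σ a : K) : V →ₗ[ZMod 2] V) ω
          = TensorProduct.map LinearMap.id ((σ a : K) : V →ₗ[ZMod 2] V)
            (TensorProduct.comm (ZMod 2) V V ω) := by rw [hωsym]
        _ = TensorProduct.comm (ZMod 2) V V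
            (TensorProduct.map ((σ a : K) : V →ₗ[ZMod 2] V) LinearMap.id ω) :=
          TensorProduct.map_comm _ _ _
        _ = TensorProduct.comm (ZMod 2) V V
            (TensorProduct.map LinearMap.id (a : V →ₗ[ZMod 2] V) ω) := by rw [hσ a]
        _ = TensorProduct.comm (ZMod 2) V V
            (TensorProduct.map LinearMap.id (a : V →ₗ[ZMod 2] V)
              (TensorProduct.comm (ZMod 2) V V ω)) := by rw [hωsym]
        _ = TensorProduct.comm (ZMod 2) V V (TensorProduct.comm (ZMod 2) V V
            (TensorProduct.map (a : V →ₗ[ZMod 2] V) LinearMap.id ω)) := by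
          rw [TensorProduct.map_comm]
        _ = TensorProduct.map (a : V →ₗ[ZMod 2] V) LinearMap.id ω := comm_comm _
    obtain ⟨k, hkω⟩ := hKS w hwinv
    have hkfix : σ k = k := by
      apply hinj
      rw [hσ k]
      calc TensorProduct.map LinearMap.id ((k : K) : V →ₗ[ZMod 2] V) ω
          = TensorProduct.map LinearMap.id ((k : K) : V →ₗ[ZMod 2] V)
            (TensorProduct.comm (ZMod 2) V V ω) := by rw [hωsym]
        _ = TensorProduct.comm (ZMod 2) V V
            (TensorProduct.map ((k : K) : V →ₗ[ZMod 2] V) LinearMap.id ω) :=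
          TensorProduct.map_comm _ _ _
        _ = TensorProduct.comm (ZMod 2) V V w := by rw [hkω]
        _ = w := comm_fix_S hwS
        _ = TensorProduct.map ((k : K) : V →ₗ[ZMod 2] V) LinearMap.id ω := hkω.symm
    have hσinv : ∀ u u' : K, σ u = u → u * u' = 1 → σ u' = u' := by
      intro u u' hσu huu
      have h1 : σ u' * σ u = 1 := by
        rw [← hσmul, mul_comm u' u, huu, hσone]
      calc σ u' = σ u' * (u * u') := by rw [huu, mul_one]
        _ = (σ u' * σ u) * u' := by rw [hσu]; ring
        _ = u' := by rw [h1, one_mul]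
    have hgood : ∀ a : K, ∃ q : V ⊗[ZMod 2] V,
        (∀ g : G, TensorProduct.map (ρ g) (ρ g) q - q ∈ S) ∧
        q + TensorProduct.comm (ZMod 2) V V q
          = TensorProduct.map ((a * σ a : K) : V →ₗ[ZMod 2] V) LinearMap.id ω := by
      intro a
      refine ⟨TensorProduct.map (a : V →ₗ[ZMod 2] V) (a : V →ₗ[ZMod 2] V) q₀, ?_, ?_⟩
      · intro g
        rw [hSS, subeq]
        have hc : TensorProduct.map (ρ g) (ρ g)
            (TensorProduct.map (a : V →ₗ[ZMod 2] V) (a : V →ₗ[ZMod 2] V) q₀)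
            = TensorProduct.map (a : V →ₗ[ZMod 2] V) (a : V →ₗ[ZMod 2] V)
              (TensorProduct.map (ρ g) (ρ g) q₀) := by
          rw [mapmap, mapmap, hKcomm a a.2 g]
        rw [hc, ← map_add]
        exact map_S_le _ ⟨_, hq₀inv' g, rfl⟩
      · have hcsym : TensorProduct.comm (ZMod 2) V V
            (TensorProduct.map (a : V →ₗ[ZMod 2] V) (a : V →ₗ[ZMod 2] V) q₀)
            = TensorProduct.map (a : V →ₗ[ZMod 2] V) (a : V →ₗ[ZMod 2] V)
              (TensorProduct.comm (ZMod 2) V V q₀) :=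
          (TensorProduct.map_comm _ _ _).symm
        rw [hcsym, ← map_add, ← hωdef]
        have h3 : TensorProduct.map (a : V →ₗ[ZMod 2] V) (a : V →ₗ[ZMod 2] V) ω
            = TensorProduct.map (a : V →ₗ[ZMod 2] V) LinearMap.id
              (TensorProduct.map LinearMap.id (a : V →ₗ[ZMod 2] V) ω) := by
          rw [mapmap, LinearMap.comp_id, LinearMap.id_comp]
        rw [h3, ← hσ a, mapmap, LinearMap.comp_id]
        rfl
    have h2K : (2 : K) = 0 := by
      have h1 := addself (1 : K)
      rwa [one_add_one_eq_two] at h1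
    rcases Classical.em (∀ a : K, σ a = a) with hidc | hidc
    · have hinjf : Function.Injective (fun l : K => l * l) := by
        intro x y hxy
        simp only at hxy
        have h1 : (x + y) * (x + y) = 0 := by
          have hexp : (x + y) * (x + y) = x * x + 2 * (x * y) + y * y := by ring
          rw [hexp, h2K, hxy]
          simp [addself]
        have h2 := mul_self_eq_zero.mp h1
        have h3 := eq_neg_of_add_eq_zero_left h2
        rwa [negself] at h3
      obtain ⟨l, hl⟩ := (Finite.injective_iff_surjective.mp hinjf) k
      simp only at hl
      obtain ⟨q, hq1, hq2⟩ := hgood l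
      refine ⟨q, hq1, ?_⟩
      rw [hq2, hidc l, hl, hkω]
    · push_neg at hidc
      obtain ⟨c, hc⟩ := hidc
      set t := c + σ c with htdef
      have ht0 : t ≠ 0 := by
        intro h
        apply hc
        rw [htdef] at h
        have h1 := eq_neg_of_add_eq_zero_left h
        rw [negself] at h1
        exact h1.symm
      have hσt : σ t = t := by
        rw [htdef, hσadd, hσinvol, add_comm]
      obtain ⟨t', htt'⟩ := hexinv t ht0
      set a := k * t' * c with hadef
      have hσa : σ a = k * t' * σ c := by
        rw [hadef, hσmul, hσmul, hkfix, hσinv t t' hσt htt']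
      have hts : a + σ a = k := by
        rw [hadef, hσa]
        have h1 : t' * (c + σ c) = 1 := by rw [← htdef, mul_comm t' t, htt']
        calc k * t' * c + k * t' * σ c = k * (t' * (c + σ c)) := by ring
          _ = k := by rw [h1, mul_one]
      have hidty : (a + 1) * σ (a + 1) + a * σ a + 1 * σ 1 = k := by
        rw [hσadd, hσone, ← hts]
        have hr : (a + 1) * (σ a + 1) + a * σ a + 1 * 1
            = 2 * (a * σ a) + 2 * 1 + (a + σ a) := by ring
        rw [hr, h2K]
        ring
      obtain ⟨q₁, hq11, hq12⟩ := hgood (a + 1)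
      obtain ⟨q₂, hq21, hq22⟩ := hgood a
      obtain ⟨q₃, hq31, hq32⟩ := hgood 1
      refine ⟨q₁ + q₂ + q₃, ?_, ?_⟩
      · intro g
        have hsum : TensorProduct.map (ρ g) (ρ g) (q₁ + q₂ + q₃) - (q₁ + q₂ + q₃)
            = (TensorProduct.map (ρ g) (ρ g) q₁ - q₁)
              + (TensorProduct.map (ρ g) (ρ g) q₂ - q₂)
              + (TensorProduct.map (ρ g) (ρ g) q₃ - q₃) := by
          rw [map_add, map_add]; abel
        rw [hsum]
        exact Submodule.add_mem _ (Submodule.add_mem _ (hq11 g) (hq21 g)) (hq31 g)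
      · have hΔ : (q₁ + q₂ + q₃) + TensorProduct.comm (ZMod 2) V V (q₁ + q₂ + q₃)
            = (q₁ + TensorProduct.comm (ZMod 2) V V q₁)
              + (q₂ + TensorProduct.comm (ZMod 2) V V q₂)
              + (q₃ + TensorProduct.comm (ZMod 2) V V q₃) := by
          rw [map_add, map_add]; abel
        rw [hΔ, hq12, hq22, hq32]
        have hca : (((a + 1) * σ (a + 1) + a * σ a + 1 * σ 1 : K) : V →ₗ[ZMod 2] V)
            = (((a + 1) * σ (a + 1) : K) : V →ₗ[ZMod 2] V)
              + ((a * σ a : K) : V →ₗ[ZMod 2] V)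
              + ((1 * σ 1 : K) : V →ₗ[ZMod 2] V) := rfl
        have hsum : TensorProduct.map (((a + 1) * σ (a + 1) : K) : V →ₗ[ZMod 2] V)
              LinearMap.id ω
            + TensorProduct.map ((a * σ a : K) : V →ₗ[ZMod 2] V) LinearMap.id ω
            + TensorProduct.map ((1 * σ 1 : K) : V →ₗ[ZMod 2] V) LinearMap.id ω
            = TensorProduct.map
              (((a + 1) * σ (a + 1) + a * σ a + 1 * σ 1 : K) : V →ₗ[ZMod 2] V)
              LinearMap.id ω := by
          rw [hca, TensorProduct.map_add_left, TensorProduct.map_add_left,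
            LinearMap.add_apply, LinearMap.add_apply]
        rw [hsum, hidty, hkω]
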